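/- Token-level temperature does not equal the sequence-level power distribution: there exist a finite alphabet, horizon T = 2, and an autoregressive model p(y_1, y_2) = p_1(y_1)·p_2(y_2|y_1) and α > 1 such that the joint distribution q(y_1,y_2) = q_1(y_1)·q_2(y_2|y_1), where each q_t ∝ p_t^α, differs from the normalized distribution π_α(y_1,y_2) ∝ p(y_1,y_2)^α. -/
import Mathlib


open Finset

/-- Token-level temperature does not equal the sequence-level power
distribution: there exist an autoregressive model on a binary alphabet with horizon 2 and
`α > 1` such that the joint of the per-token power-tempered conditionals differs from the
normalized power distribution of the joint. -/
theorem tokenwise_temperature_ne_power_distribution :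
    ∃ (p₁ : Fin 2 → ℝ) (p₂ : Fin 2 → Fin 2 → ℝ) (α : ℝ),
      (∀ a, 0 ≤ p₁ a) ∧ (∑ a, p₁ a = 1) ∧
      (∀ a b, 0 ≤ p₂ a b) ∧ (∀ a, ∑ b, p₂ a b = 1) ∧
      1 < α ∧
      ¬ (∀ a b, (p₁ a ^ α / ∑ a', p₁ a' ^ α) * (p₂ a b ^ α / ∑ b', p₂ a b' ^ α)
            = (p₁ a * p₂ a b) ^ α / ∑ a', ∑ b', (p₁ a' * p₂ a' b') ^ α) := by
  refine ⟨fun _ => 1/2, fun a b => if a = 0 then 1/2 else if b = 0 then 1 else 0,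
    2, ?_, ?_, ?_, ?_, by norm_num, ?_⟩
  · intro a; norm_num
  · simp [Fin.sum_univ_two]
  · intro a b; dsimp only; split <;> [norm_num; (split <;> norm_num)]
  · intro a; fin_cases a <;> simp [Fin.sum_univ_two]
  · intro h
    have := h 0 0
    simp only [Fin.sum_univ_two] at this
    norm_num [Real.rpow_two] at this
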